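/- Let G be a labeled simple graph and G̃ be obtained from G by the move Ω₄′ at a vertex v of framing 1 and index p: ã_ij = a_ij + a_ip a_jp for i,j ≠ p, and ã_ij = a_ij if i = p or j = p. Then for every state s ⊆ V(G), corank A(G̃(s ⊕ p)) = corank A(G(s)), where s ⊕ p denotes the symmetric difference s △ {v_p}. -/
import Mathlib


open Matrix symmDiff

/-- The matrix obtained from `A` by the move `Ω₄′` at the vertex with index `p`:
`ã_ij = a_ij + a_ip a_jp` for `i, j ≠ p`, and `ã_ij = a_ij` if `i = p` or `j = p`. -/
def piv {n : ℕ} (A : Matrix (Fin n) (Fin n) (ZMod 2)) (p : Fin n) :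
    Matrix (Fin n) (Fin n) (ZMod 2) :=
  Matrix.of fun i j => if i = p ∨ j = p then A i j else A i j + A i p * A j p

/-- Corank (size minus rank) as an integer. -/
noncomputable def corankZ {m : Type*} [Fintype m] (M : Matrix m m (ZMod 2)) : ℤ :=
  (Fintype.card m : ℤ) - M.rank

section helpers
variable {K : Type*} [Field K]

private lemma range_prodMap' {R M M₂ M₃ M₄ : Type*} [CommRing R] [AddCommGroup M] [AddCommGroup M₂]
    [AddCommGroup M₃] [AddCommGroup M₄] [Module R M] [Module R M₂] [Module R M₃] [Module R M₄]
    (f : M →ₗ[R] M₂) (g : M₃ →ₗ[R] M₄) :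
    LinearMap.range (f.prodMap g) = (LinearMap.range f).prod (LinearMap.range g) := by
  ext ⟨a, b⟩
  simp only [LinearMap.mem_range, Submodule.mem_prod]
  constructor
  · rintro ⟨⟨x, y⟩, h⟩
    exact ⟨⟨x, (Prod.ext_iff.mp h).1⟩, ⟨y, (Prod.ext_iff.mp h).2⟩⟩
  · rintro ⟨⟨x, hx⟩, ⟨y, hy⟩⟩
    exact ⟨(x, y), by simp [LinearMap.prodMap_apply, hx, hy]⟩

private def prodLequiv {R M N : Type*} [Ring R] [AddCommGroup M] [AddCommGroup N] [Module R M]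
    [Module R N] (p : Submodule R M) (q : Submodule R N) : (p.prod q) ≃ₗ[R] p × q where
  toFun x := (⟨x.1.1, (Submodule.mem_prod.mp x.2).1⟩, ⟨x.1.2, (Submodule.mem_prod.mp x.2).2⟩)
  invFun x := ⟨(x.1.1, x.2.1), Submodule.mem_prod.mpr ⟨x.1.2, x.2.2⟩⟩
  map_add' _ _ := rfl
  map_smul' _ _ := rfl
  left_inv _ := rfl
  right_inv _ := rfl

private lemma rank_fromBlocks_diag {m n : Type*} [Fintype m] [Fintype n]
    (A : Matrix m m K) (D : Matrix n n K) :
    (fromBlocks A 0 0 D).rank = A.rank + D.rank := by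
  classical
  let e := LinearEquiv.sumArrowLequivProdArrow m n K K
  have h : (fromBlocks A 0 0 D).mulVecLin
      = (e.symm : ((m → K) × (n → K)) →ₗ[K] _) ∘ₗ
        ((A.mulVecLin.prodMap D.mulVecLin) ∘ₗ (e : (m ⊕ n → K) →ₗ[K] _)) := by
    apply LinearMap.ext; intro x
    have hx : x = Sum.elim (x ∘ Sum.inl) (x ∘ Sum.inr) := by funext i; cases i <;> rfl
    simp only [Matrix.mulVecLin_apply, LinearMap.comp_apply, LinearEquiv.coe_coe]
    rw [hx, Matrix.fromBlocks_mulVec]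
    funext i
    cases i <;>
      simp [e, LinearEquiv.sumArrowLequivProdArrow, Equiv.sumArrowEquivProdArrow, Matrix.zero_mulVec]
  rw [Matrix.rank, h, LinearMap.range_comp,
    LinearMap.range_comp_of_range_eq_top _ (LinearEquiv.range e),
    LinearEquiv.finrank_map_eq, range_prodMap', (prodLequiv _ _).finrank_eq,
    Module.finrank_prod]
  rfl

private lemma rank_fromBlocks_one {n : Type*} [Fintype n] [DecidableEq n]
    (B : Matrix Unit n K) (C : Matrix n Unit K) (D : Matrix n n K) :
    (fromBlocks (1 : Matrix Unit Unit K) B C D).rank = 1 + (D - C * B).rank := by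
  have : Invertible (1 : Matrix Unit Unit K) := invertibleOne
  have hU : IsUnit (fromBlocks (1 : Matrix Unit Unit K) (⅟(1 : Matrix Unit Unit K) * B) 0 1).det := by
    rw [Matrix.det_fromBlocks_zero₂₁]; simp
  have hL : IsUnit (fromBlocks (1 : Matrix Unit Unit K) 0 (C * ⅟(1 : Matrix Unit Unit K)) 1).det := by
    rw [Matrix.det_fromBlocks_zero₁₂]; simp
  rw [Matrix.fromBlocks_eq_of_invertible₁₁, Matrix.rank_mul_eq_left_of_isUnit_det _ _ hU,
    Matrix.rank_mul_eq_right_of_isUnit_det _ _ hL, rank_fromBlocks_diag, Matrix.rank_one]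
  simp

end helpers

private lemma piv_piv {n : ℕ} (A : Matrix (Fin n) (Fin n) (ZMod 2)) (p : Fin n) :
    piv (piv A p) p = A := by
  ext i j
  by_cases hi : i = p
  · simp [piv, hi]
  · by_cases hj : j = p
    · simp [piv, hj]
    · simp only [piv, Matrix.of_apply, hi, hj]
      simp only [false_or, or_false, if_false, or_true, if_true]
      rw [add_assoc, CharTwo.add_self_eq_zero, add_zero]

private lemma piv_isSymm {n : ℕ} {A : Matrix (Fin n) (Fin n) (ZMod 2)} (hA : A.IsSymm)
    (p : Fin n) : (piv A p).IsSymm := by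
  ext i j
  simp only [Matrix.transpose_apply, piv, Matrix.of_apply, or_comm (a := j = p)]
  rw [hA.apply, mul_comm]

private lemma rank_state_pivot {n : ℕ} (A : Matrix (Fin n) (Fin n) (ZMod 2)) (hA : A.IsSymm)
    (p : Fin n) (hp : A p p = 1) (s : Finset (Fin n)) (hs : p ∈ s) :
    (A.submatrix (fun i : {x // x ∈ s} => i.val) (fun i : {x // x ∈ s} => i.val)).rank
      = 1 + ((piv A p).submatrix (fun i : {x // x ∈ s.erase p} => i.val)
          (fun i : {x // x ∈ s.erase p} => i.val)).rank := by
  classical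
  set t := s.erase p with ht
  let e : Unit ⊕ {x // x ∈ t} ≃ {x // x ∈ s} :=
  { toFun := fun i => i.elim (fun _ => ⟨p, hs⟩) (fun x => ⟨x.1, Finset.mem_of_mem_erase x.2⟩)
    invFun := fun x => if h : x.1 = p then Sum.inl () else
      Sum.inr ⟨x.1, Finset.mem_erase.mpr ⟨h, x.2⟩⟩
    left_inv := by
      rintro (⟨⟩ | x)
      · simp
      · have hx : x.1 ≠ p := (Finset.mem_erase.mp x.2).1
        simp [hx]
    right_inv := by
      rintro ⟨x, hx⟩
      by_cases h : x = p <;> simp [h] }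
  let B : Matrix Unit {x // x ∈ t} (ZMod 2) := Matrix.of fun _ j => A p j.1
  let C : Matrix {x // x ∈ t} Unit (ZMod 2) := Matrix.of fun i _ => A i.1 p
  let D : Matrix {x // x ∈ t} {x // x ∈ t} (ZMod 2) := Matrix.of fun i j => A i.1 j.1
  have key : (A.submatrix (fun i : {x // x ∈ s} => i.val)
      (fun i : {x // x ∈ s} => i.val)).submatrix e e = fromBlocks 1 B C D := by
    ext i j
    cases i <;> cases j <;>
      simp [e, B, C, D, fromBlocks, Matrix.one_apply, hp]
  have hrk : (A.submatrix (fun i : {x // x ∈ s} => i.val)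
      (fun i : {x // x ∈ s} => i.val)).rank = (fromBlocks 1 B C D).rank := by
    rw [← key, Matrix.rank_submatrix]
  rw [hrk, rank_fromBlocks_one]
  congr 1
  congr 1
  ext i j
  have hi : i.1 ≠ p := (Finset.mem_erase.mp i.2).1
  have hj : j.1 ≠ p := (Finset.mem_erase.mp j.2).1
  simp only [Matrix.sub_apply, Matrix.mul_apply, Finset.sum_const, Matrix.submatrix_apply,
    piv, Matrix.of_apply, if_neg (by tauto : ¬(i.1 = p ∨ j.1 = p)), B, C, D,
    Fintype.univ_punit, Finset.card_singleton, one_smul]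
  have h2 : A p j.1 = A j.1 p := hA.apply j.1 p
  rw [h2, sub_eq_add_neg, CharTwo.neg_eq]


/-- Invariance of state coranks under the move `Ω₄′`: if `A` is symmetric with
`a_pp = 1` (framing of the pivot vertex is `1`), then for every state `s`,
`corank Ã(s ⊕ p) = corank A(s)`, where `s ⊕ p = s △ {p}`. -/
theorem stmt15 {n : ℕ} (A : Matrix (Fin n) (Fin n) (ZMod 2)) (hA : A.IsSymm)
    (p : Fin n) (hp : A p p = 1) (s : Finset (Fin n)) :
    corankZ ((piv A p).submatrix
        (fun i : {x // x ∈ s ∆ ({p} : Finset (Fin n))} => i.val)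
        (fun i : {x // x ∈ s ∆ ({p} : Finset (Fin n))} => i.val))
      = corankZ (A.submatrix (fun i : {x // x ∈ s} => i.val)
          (fun i : {x // x ∈ s} => i.val)) := by
  classical
  by_cases hps : p ∈ s
  · have h1 : s ∆ ({p} : Finset (Fin n)) = s.erase p := by
      ext x
      rcases eq_or_ne x p with rfl | hx
      · simp [Finset.mem_symmDiff, hps]
      · simp [Finset.mem_symmDiff, hx]
    rw [h1]
    have h2 := rank_state_pivot A hA p hp s hps
    have hcard : 1 ≤ s.card := Finset.card_pos.mpr ⟨p, hps⟩
    simp only [corankZ, Fintype.card_coe, h2, Finset.card_erase_of_mem hps]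
    push_cast [Nat.cast_sub hcard]
    ring
  · have h1 : s ∆ ({p} : Finset (Fin n)) = insert p s := by
      ext x
      rcases eq_or_ne x p with rfl | hx
      · simp [Finset.mem_symmDiff, hps]
      · simp [Finset.mem_symmDiff, hx]
    rw [h1]
    have hsym := piv_isSymm hA p
    have hpp : (piv A p) p p = 1 := by simpa [piv] using hp
    have h2 := rank_state_pivot (piv A p) hsym p hpp (insert p s) (Finset.mem_insert_self p s)
    rw [Finset.erase_insert hps, piv_piv] at h2
    simp only [corankZ, Fintype.card_coe, h2, Finset.card_insert_of_notMem hps]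
    push_cast
    ring
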